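/- Let b_1, b_2 ≥ 2 be integers with b_1·b_2 odd, and let r_1 ≥ b_1 and r > b_1·b_2 be integers. Set q = 2^{b_2}, n_1 = (q^{r_1 - b_1 + 1} - 1)/(q - 1), n_L = 2^{r - b_1 b_2 + 1} - 1 and n_2 = ⌊n_L / b_1⌋. Assume: (i) there exists an F_q-linear code C_1 ⊆ F_q^{n_1} of dimension n_1 - r_1 over F_q such that for any two distinct words u ≠ v of F_q^{n_1}, each of whose support is contained in some interval of b_1 consecutive coordinates, u - v ∉ C_1 (an optimum b_1-burst-correcting code over GF(2^{b_2})); and (ii) there exists a binary linear code C_2 ⊆ F_2^{n_L} of dimension n_L - (r - b_1 b_2 + 1) such that for every pattern e ∈ F_2^{b_1 b_2} and all positions 0 ≤ i, j ≤ n_L - b_1 b_2 with P_i(e) ≠ P_j(e), one has P_i(e) - P_j(e) ∉ C_2 (a binary (b_1 b_2)-burst-locator code). Then there exists an F_2-linear subspace C of the space of n_1 × n_2 binary arrays with dim(C) ≥ n_1·n_2 - (r_1·b_2 + r - b_1·b_2 + 2) which corrects every cluster-error of size b_1 × b_2: for any two distinct arrays E_1 ≠ E_2 ∈ F_2^{n_1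 × n_2}, each of whose support is contained in some axis-aligned rectangle of size b_1 × b_2, E_1 - E_2 ∉ C. -/

import Mathlib

/-- `place n b i e` is the word of length `n` which carries the burst pattern `e`
(of length `b`, entries aligned cyclically to the residues modulo `b`) starting at
position `i`. -/
def place (n b i : ℕ) (e : ℕ → ZMod 2) : Fin n → ZMod 2 :=
  fun j => if i ≤ (j : ℕ) ∧ (j : ℕ) < i + b then e ((j : ℕ) % b) else 0

lemma uniq_mod {b i₀ x y : ℕ} (hx1 : i₀ ≤ x) (hx2 : x < i₀ + b)
    (hy1 : i₀ ≤ y) (hy2 : y < i₀ + b) (h : x % b = y % b) : x = y := by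
  rcases le_total x y with hle | hle
  · have hd : b ∣ y - x := (Nat.modEq_iff_dvd' hle).mp h
    have h3 := Nat.eq_zero_of_dvd_of_lt hd (by omega)
    omega
  · have hd : b ∣ x - y := (Nat.modEq_iff_dvd' hle).mp h.symm
    have h3 := Nat.eq_zero_of_dvd_of_lt hd (by omega)
    omega

def resSum (n₁ n₂ b₂ : ℕ) (E : Fin n₁ → Fin n₂ → ZMod 2) (i : Fin n₁) (c : ℕ) : ZMod 2 :=
  ∑ j ∈ Finset.univ.filter (fun j : Fin n₂ => (j : ℕ) % b₂ = c), E i j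

lemma resSum_eq_single {n₁ n₂ b₂ : ℕ} (E : Fin n₁ → Fin n₂ → ZMod 2) (c₀ : ℕ)
    (hw : ∀ (i : Fin n₁) (j : Fin n₂), E i j ≠ 0 → c₀ ≤ (j : ℕ) ∧ (j : ℕ) < c₀ + b₂)
    (i : Fin n₁) (j : Fin n₂) (h1 : c₀ ≤ (j : ℕ)) (h2 : (j : ℕ) < c₀ + b₂) :
    resSum n₁ n₂ b₂ E i ((j : ℕ) % b₂) = E i j := by
  unfold resSum
  refine Finset.sum_eq_single j (fun j' hj' hne => ?_) (fun hj => ?_)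
  · by_contra hE
    have hw' := hw i j' hE
    have hmod : (j' : ℕ) % b₂ = (j : ℕ) % b₂ := (Finset.mem_filter.mp hj').2
    exact hne (Fin.ext (uniq_mod hw'.1 hw'.2 h1 h2 hmod))
  · have : j ∈ Finset.univ.filter (fun j' : Fin n₂ => (j' : ℕ) % b₂ = (j : ℕ) % b₂) :=
      Finset.mem_filter.mpr ⟨Finset.mem_univ j, rfl⟩
    exact absurd (by simpa using this) hj

/-- column-residue fold of an array into a word over `K` -/
def rowFold (n₁ n₂ b₂ : ℕ) {K : Type} [AddCommGroup K] [Module (ZMod 2) K] (g : ℕ → K) :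
    (Fin n₁ → Fin n₂ → ZMod 2) →ₗ[ZMod 2] (Fin n₁ → K) where
  toFun E i := ∑ j : Fin n₂, E i j • g ((j : ℕ) % b₂)
  map_add' x y := by
    funext i
    simp [add_smul, Finset.sum_add_distrib]
  map_smul' c x := by
    funext i
    simp [mul_smul, Finset.smul_sum]

@[simp] lemma rowFold_apply (n₁ n₂ b₂ : ℕ) {K : Type} [AddCommGroup K] [Module (ZMod 2) K]
    (g : ℕ → K) (E : Fin n₁ → Fin n₂ → ZMod 2) (i : Fin n₁) :
    rowFold n₁ n₂ b₂ g E i = ∑ j : Fin n₂, E i j • g ((j : ℕ) % b₂) := rfl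

def colFold (n₁ n₂ nL b₁ : ℕ) :
    (Fin n₁ → Fin n₂ → ZMod 2) →ₗ[ZMod 2] (Fin nL → ZMod 2) where
  toFun E m :=
    if h : (m : ℕ) / b₁ < n₂ then
      ∑ i : Fin n₁, (if (i : ℕ) % b₁ = (m : ℕ) % b₁ then E i ⟨(m : ℕ) / b₁, h⟩ else 0)
    else 0
  map_add' x y := by
    funext m
    by_cases h : (m : ℕ) / b₁ < n₂
    · simp only [dif_pos h, Pi.add_apply, ← Finset.sum_add_distrib]
      refine Finset.sum_congr rfl fun i _ => ?_
      split_ifs <;> simp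
    · simp [dif_neg h]
  map_smul' c x := by
    funext m
    by_cases h : (m : ℕ) / b₁ < n₂
    · simp only [dif_pos h, RingHom.id_apply, Pi.smul_apply, Finset.smul_sum]
      refine Finset.sum_congr rfl fun i _ => ?_
      split_ifs <;> simp
    · simp [dif_neg h]

@[simp] lemma colFold_apply (n₁ n₂ nL b₁ : ℕ) (E : Fin n₁ → Fin n₂ → ZMod 2) (m : Fin nL) :
    colFold n₁ n₂ nL b₁ E m =
      if h : (m : ℕ) / b₁ < n₂ then
        ∑ i : Fin n₁, (if (i : ℕ) % b₁ = (m : ℕ) % b₁ then E i ⟨(m : ℕ) / b₁, h⟩ else 0)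
      else 0 := rfl

set_option maxHeartbeats 4000000 in
theorem stmt16 (b₁ b₂ r₁ r : ℕ) (hb₁ : 2 ≤ b₁) (hb₂ : 2 ≤ b₂)
    (hodd : Odd (b₁ * b₂)) (hr₁ : b₁ ≤ r₁) (hr : b₁ * b₂ < r) :
    ∀ n₁ nL n₂ : ℕ,
      n₁ = ((2 ^ b₂) ^ (r₁ - b₁ + 1) - 1) / (2 ^ b₂ - 1) →
      nL = 2 ^ (r - b₁ * b₂ + 1) - 1 →
      n₂ = nL / b₁ →
      (∃ C₁ : Submodule (GaloisField 2 b₂) (Fin n₁ → GaloisField 2 b₂),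
        Module.finrank (GaloisField 2 b₂) C₁ = n₁ - r₁ ∧
        ∀ u v : Fin n₁ → GaloisField 2 b₂, u ≠ v →
          (∃ i : ℕ, ∀ j : Fin n₁, u j ≠ 0 → i ≤ (j : ℕ) ∧ (j : ℕ) < i + b₁) →
          (∃ i : ℕ, ∀ j : Fin n₁, v j ≠ 0 → i ≤ (j : ℕ) ∧ (j : ℕ) < i + b₁) →
          u - v ∉ C₁) →
      (∃ C₂ : Submodule (ZMod 2) (Fin nL → ZMod 2),
        Module.finrank (ZMod 2) C₂ = nL - (r - b₁ * b₂ + 1) ∧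
        ∀ (e : ℕ → ZMod 2) (i j : ℕ), i ≤ nL - b₁ * b₂ → j ≤ nL - b₁ * b₂ →
          place nL (b₁ * b₂) i e ≠ place nL (b₁ * b₂) j e →
          place nL (b₁ * b₂) i e - place nL (b₁ * b₂) j e ∉ C₂) →
      ∃ C : Submodule (ZMod 2) (Fin n₁ → Fin n₂ → ZMod 2),
        n₁ * n₂ - (r₁ * b₂ + r - b₁ * b₂ + 2) ≤ Module.finrank (ZMod 2) C ∧
        ∀ E₁ E₂ : Fin n₁ → Fin n₂ → ZMod 2, E₁ ≠ E₂ →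
          (∃ i₀ j₀ : ℕ, ∀ (i : Fin n₁) (j : Fin n₂), E₁ i j ≠ 0 →
            (i₀ ≤ (i : ℕ) ∧ (i : ℕ) < i₀ + b₁) ∧ (j₀ ≤ (j : ℕ) ∧ (j : ℕ) < j₀ + b₂)) →
          (∃ i₀ j₀ : ℕ, ∀ (i : Fin n₁) (j : Fin n₂), E₂ i j ≠ 0 →
            (i₀ ≤ (i : ℕ) ∧ (i : ℕ) < i₀ + b₁) ∧ (j₀ ≤ (j : ℕ) ∧ (j : ℕ) < j₀ + b₂)) →
          E₁ - E₂ ∉ C := by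
  classical
  rintro n₁ nL n₂ hn₁ hnL hn₂ ⟨C₁, hC₁rk, hC₁⟩ ⟨C₂, hC₂rk, hC₂⟩
  have hb₂0 : b₂ ≠ 0 := by omega
  set K := GaloisField 2 b₂ with hK
  have hKrank : Module.finrank (ZMod 2) K = b₂ := GaloisField.finrank 2 hb₂0
  set B : Module.Basis (Fin b₂) (ZMod 2) K :=
    (Module.finBasis (ZMod 2) K).reindex (finCongr hKrank) with hBdef
  set g : ℕ → K := fun c => if h : c < b₂ then B ⟨c, h⟩ else 0 with hgdef
  set φ := rowFold n₁ n₂ b₂ (K := K) g with hφdef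
  set ψ := colFold n₁ n₂ nL b₁ with hψdef
  set C₁' : Submodule (ZMod 2) (Fin n₁ → K) := C₁.restrictScalars (ZMod 2) with hC₁'def
  set Φ := ((C₁'.mkQ.comp φ).prod (C₂.mkQ.comp ψ)) with hΦdef
  refine ⟨LinearMap.ker Φ, ?_, ?_⟩
  · -- rank bound
    have hrange := LinearMap.finrank_range_add_finrank_ker (K := ZMod 2) Φ
    have hdom : Module.finrank (ZMod 2) (Fin n₁ → Fin n₂ → ZMod 2) = n₁ * n₂ := by
      rw [Module.finrank_pi_fintype]
      simp [Module.finrank_fintype_fun_eq_card, Finset.sum_const]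
    have hq1 : Module.finrank (ZMod 2) ((Fin n₁ → K) ⧸ C₁')
        + Module.finrank (ZMod 2) C₁' = n₁ * b₂ := by
      rw [Submodule.finrank_quotient_add_finrank, Module.finrank_pi_fintype]
      simp [hKrank, Finset.sum_const, Nat.mul_comm]
    have hC₁' : Module.finrank (ZMod 2) C₁' = b₂ * (n₁ - r₁) := by
      have e := (Submodule.restrictScalarsEquiv (ZMod 2) K (Fin n₁ → K) C₁).restrictScalars (ZMod 2)
      rw [e.finrank_eq, ← Module.finrank_mul_finrank (ZMod 2) K ↥C₁, hKrank, hC₁rk]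
    have hq2 : Module.finrank (ZMod 2) ((Fin nL → ZMod 2) ⧸ C₂)
        + Module.finrank (ZMod 2) C₂ = nL := by
      rw [Submodule.finrank_quotient_add_finrank, Module.finrank_fintype_fun_eq_card]
      simp
    have hcodomle : Module.finrank (ZMod 2)
        ((((Fin n₁ → K) ⧸ C₁')) × ((Fin nL → ZMod 2) ⧸ C₂))
        = Module.finrank (ZMod 2) ((Fin n₁ → K) ⧸ C₁')
          + Module.finrank (ZMod 2) ((Fin nL → ZMod 2) ⧸ C₂) :=
      Module.finrank_prod
    have hrangele : Module.finrank (ZMod 2) (LinearMap.range Φ)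
        ≤ Module.finrank (ZMod 2) ((Fin n₁ → K) ⧸ C₁')
          + Module.finrank (ZMod 2) ((Fin nL → ZMod 2) ⧸ C₂) := by
      rw [← hcodomle]
      exact (LinearMap.range Φ).finrank_le
    -- arithmetic
    have hmul : n₁ * b₂ ≤ r₁ * b₂ + b₂ * (n₁ - r₁) := by
      have h1 : n₁ ≤ r₁ + (n₁ - r₁) := by omega
      calc n₁ * b₂ ≤ (r₁ + (n₁ - r₁)) * b₂ := Nat.mul_le_mul_right _ h1
        _ = r₁ * b₂ + b₂ * (n₁ - r₁) := by ring
    rw [hdom] at hrange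
    rw [hC₁'] at hq1
    rw [hC₂rk] at hq2
    set A := Module.finrank (ZMod 2) ((Fin n₁ → K) ⧸ C₁') with hA
    set D := Module.finrank (ZMod 2) ((Fin nL → ZMod 2) ⧸ C₂) with hD
    set R1 := Module.finrank (ZMod 2) (LinearMap.range Φ)
    set K1 := Module.finrank (ZMod 2) (LinearMap.ker Φ)
    set p1 := n₁ * n₂
    set p2 := r₁ * b₂
    set p3 := b₁ * b₂
    set p4 := b₂ * (n₁ - r₁)
    omega
  · -- correction property
    rintro E₁ E₂ hne ⟨a₁, c₁, hw₁⟩ ⟨a₂, c₂, hw₂⟩ hmem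
    have hb₁0 : 0 < b₁ := by omega
    have hb₂0' : 0 < b₂ := by omega
    have hΦ0 : Φ (E₁ - E₂) = 0 := LinearMap.mem_ker.mp hmem
    have hφmem : φ E₁ - φ E₂ ∈ C₁ := by
      have h1 := congrArg Prod.fst hΦ0
      rw [hΦdef] at h1
      simp only [LinearMap.prod_apply, Pi.prod, LinearMap.comp_apply, Function.prod_apply, Prod.fst_zero] at h1
      rw [map_sub, map_sub, Submodule.mkQ_apply, Submodule.mkQ_apply,
        ← Submodule.Quotient.mk_sub, Submodule.Quotient.mk_eq_zero] at h1
      exact h1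
    have hψmem : ψ E₁ - ψ E₂ ∈ C₂ := by
      have h1 := congrArg Prod.snd hΦ0
      rw [hΦdef] at h1
      simp only [LinearMap.prod_apply, Pi.prod, LinearMap.comp_apply, Function.prod_apply, Prod.snd_zero] at h1
      rw [map_sub, map_sub, Submodule.mkQ_apply, Submodule.mkQ_apply,
        ← Submodule.Quotient.mk_sub, Submodule.Quotient.mk_eq_zero] at h1
      exact h1
    -- basis representation of the row fold
    have hrepr : ∀ (E : Fin n₁ → Fin n₂ → ZMod 2) (i : Fin n₁) (c : Fin b₂),
        B.repr (φ E i) c = resSum n₁ n₂ b₂ E i (c : ℕ) := by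
      intro E i c
      rw [hφdef, rowFold_apply, map_sum, Finset.sum_apply']
      rw [resSum, Finset.sum_filter]
      refine Finset.sum_congr rfl fun j _ => ?_
      rw [map_smul, hgdef]
      simp only []
      rw [dif_pos (Nat.mod_lt _ hb₂0')]
      rw [Module.Basis.repr_self, Finsupp.smul_apply, Finsupp.single_apply]
      by_cases hc : (j : ℕ) % b₂ = (c : ℕ)
      · rw [if_pos (Fin.ext hc), if_pos hc, smul_eq_mul, mul_one]
      · rw [if_neg (fun hh => hc (congrArg Fin.val hh)), if_neg hc, smul_eq_mul, mul_zero]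
    -- bursts of the row fold
    have hburst : ∀ (E : Fin n₁ → Fin n₂ → ZMod 2) (a c₀ : ℕ),
        (∀ (i : Fin n₁) (j : Fin n₂), E i j ≠ 0 →
          (a ≤ (i:ℕ) ∧ (i:ℕ) < a + b₁) ∧ (c₀ ≤ (j:ℕ) ∧ (j:ℕ) < c₀ + b₂)) →
        ∀ i : Fin n₁, φ E i ≠ 0 → a ≤ (i:ℕ) ∧ (i:ℕ) < a + b₁ := by
      intro E a c₀ hw i hi
      by_contra hcon
      apply hi
      rw [hφdef, rowFold_apply]
      refine Finset.sum_eq_zero fun j _ => ?_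
      have hE : E i j = 0 := by
        by_contra hE
        exact hcon ((hw i j hE).1)
      rw [hE, zero_smul]
    have hu : φ E₁ = φ E₂ := by
      by_contra hneq
      exact hC₁ (φ E₁) (φ E₂) hneq ⟨a₁, fun i hi => hburst E₁ a₁ c₁ hw₁ i hi⟩
        ⟨a₂, fun i hi => hburst E₂ a₂ c₂ hw₂ i hi⟩ hφmem
    have hSeq : ∀ (i : Fin n₁) (c : ℕ), c < b₂ →
        resSum n₁ n₂ b₂ E₁ i c = resSum n₁ n₂ b₂ E₂ i c := by
      intro i c hc
      have h2 := congrFun hu i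
      have h3 := congrArg (fun x => B.repr x ⟨c, hc⟩) h2
      rw [hrepr E₁ i ⟨c, hc⟩, hrepr E₂ i ⟨c, hc⟩] at h3
      exact h3
    by_cases hsmall : n₂ ≤ b₂
    · -- small case: the row fold determines everything
      apply hne
      funext i j
      have h1 := resSum_eq_single (b₂ := b₂) E₁ 0
        (fun i' j' _ => ⟨Nat.zero_le _, by have := j'.isLt; omega⟩) i j (Nat.zero_le _)
        (by have := j.isLt; omega)
      have h2 := resSum_eq_single (b₂ := b₂) E₂ 0
        (fun i' j' _ => ⟨Nat.zero_le _, by have := j'.isLt; omega⟩) i j (Nat.zero_le _)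
        (by have := j.isLt; omega)
      rw [← h1, hSeq i _ (Nat.mod_lt _ hb₂0'), h2]
    -- main case
    have hn₂b : b₂ ≤ n₂ := by omega
    have hrowzero : ∀ (E : Fin n₁ → Fin n₂ → ZMod 2) (c₀ : ℕ),
        (∀ (i : Fin n₁) (j : Fin n₂), E i j ≠ 0 → c₀ ≤ (j:ℕ) ∧ (j:ℕ) < c₀ + b₂) →
        ∀ i, φ E i = 0 → ∀ j, E i j = 0 := by
      intro E c₀ hw i h0 j
      by_contra hE
      have hwj := hw i j hE
      have hs := resSum_eq_single E c₀ hw i j hwj.1 hwj.2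
      have hz : resSum n₁ n₂ b₂ E i ((j:ℕ) % b₂) = 0 := by
        have := hrepr E i ⟨(j:ℕ) % b₂, Nat.mod_lt _ hb₂0'⟩
        rw [h0] at this
        simp only [map_zero, Finsupp.coe_zero, Pi.zero_apply] at this
        exact this.symm
      rw [hs] at hz
      exact hE hz
    have hphirow : ∀ (E : Fin n₁ → Fin n₂ → ZMod 2) (i : Fin n₁),
        φ E i ≠ 0 → ∃ j, E i j ≠ 0 := by
      intro E i hi
      by_contra h
      push_neg at h
      apply hi
      rw [hφdef, rowFold_apply]
      exact Finset.sum_eq_zero fun j _ => by rw [h j, zero_smul]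
    have hune0 : ∃ i, φ E₁ i ≠ 0 := by
      by_contra hz
      push_neg at hz
      apply hne
      funext i j
      have h1 : E₁ i j = 0 := hrowzero E₁ c₁ (fun i' j' h => (hw₁ i' j' h).2) i (hz i) j
      have h2 : E₂ i j = 0 := hrowzero E₂ c₂ (fun i' j' h => (hw₂ i' j' h).2) i
        (by rw [← hu]; exact hz i) j
      rw [h1, h2]
    obtain ⟨i₀, hi₀, hi₀min⟩ : ∃ i₀ : Fin n₁, φ E₁ i₀ ≠ 0 ∧
        ∀ i : Fin n₁, φ E₁ i ≠ 0 → i₀ ≤ i := by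
      obtain ⟨iw, hiw⟩ := hune0
      have hTne : (Finset.univ.filter (fun i => φ E₁ i ≠ 0)).Nonempty :=
        ⟨iw, Finset.mem_filter.mpr ⟨Finset.mem_univ _, hiw⟩⟩
      refine ⟨_, (Finset.mem_filter.mp (Finset.min'_mem _ hTne)).2, fun i hi => ?_⟩
      exact Finset.min'_le _ i (Finset.mem_filter.mpr ⟨Finset.mem_univ _, hi⟩)
    have hrowwin : ∀ (E : Fin n₁ → Fin n₂ → ZMod 2) (a c₀ : ℕ),
        (∀ (i : Fin n₁) (j : Fin n₂), E i j ≠ 0 →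
          (a ≤ (i:ℕ) ∧ (i:ℕ) < a + b₁) ∧ (c₀ ≤ (j:ℕ) ∧ (j:ℕ) < c₀ + b₂)) →
        φ E = φ E₁ →
        ∀ (i : Fin n₁) (j : Fin n₂), E i j ≠ 0 →
          (i₀:ℕ) ≤ (i:ℕ) ∧ (i:ℕ) < (i₀:ℕ) + b₁ := by
      intro E a c₀ hw hE i j hij
      have h1 : φ E i ≠ 0 := fun h0 =>
        hij (hrowzero E c₀ (fun i' j' h => (hw i' j' h).2) i h0 j)
      have h2 : (i₀:ℕ) ≤ (i:ℕ) := hi₀min i (by rw [← hE]; exact h1)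
      obtain ⟨j', hj'⟩ := hphirow E i₀ (by rw [hE]; exact hi₀)
      have h3 := (hw i₀ j' hj').1
      have h4 := (hw i j hij).1
      exact ⟨h2, by omega⟩
    -- the canonical representative of a row residue inside the window
    set iofk : ℕ → ℕ := fun k => (i₀:ℕ) + ((k + b₁ - (i₀:ℕ) % b₁) % b₁) with hiofkdef
    have hiofk_lt : ∀ k, (i₀:ℕ) ≤ iofk k ∧ iofk k < (i₀:ℕ) + b₁ := by
      intro k
      rw [hiofkdef]
      exact ⟨Nat.le_add_right _ _,
        Nat.add_lt_add_left (Nat.mod_lt (k + b₁ - (i₀:ℕ) % b₁) hb₁0) _⟩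
    have hiofk_mod : ∀ k, k < b₁ → iofk k % b₁ = k := by
      intro k hk
      rw [hiofkdef]
      simp only []
      obtain ⟨M, hM⟩ : ∃ M, (i₀:ℕ) % b₁ = M := ⟨_, rfl⟩
      have hMlt : M < b₁ := hM ▸ Nat.mod_lt _ hb₁0
      have hMle : M ≤ (i₀:ℕ) := hM ▸ Nat.mod_le _ _
      have hdvd : b₁ ∣ (i₀:ℕ) - M := by
        refine ⟨(i₀:ℕ) / b₁, ?_⟩
        have h := Nat.div_add_mod (i₀:ℕ) b₁
        rw [hM] at h
        calc (i₀:ℕ) - M = b₁ * ((i₀:ℕ) / b₁) + M - M := by rw [h]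
          _ = b₁ * ((i₀:ℕ) / b₁) := by simp
      rw [hM]
      have hme : (i₀:ℕ) + (k + b₁ - M) % b₁ ≡ k [MOD b₁] := by
        calc (i₀:ℕ) + (k + b₁ - M) % b₁
            ≡ (i₀:ℕ) + (k + b₁ - M) [MOD b₁] := Nat.ModEq.add_left _ (Nat.mod_modEq _ _)
          _ = ((i₀:ℕ) - M) + (k + b₁) := by omega
          _ ≡ 0 + (k + b₁) [MOD b₁] :=
              Nat.ModEq.add_right _ ((Nat.modEq_zero_iff_dvd).mpr hdvd)
          _ = k + b₁ := by omega
          _ ≡ k [MOD b₁] := by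
              have h2 : (k + b₁) % b₁ = k % b₁ := Nat.add_mod_right k b₁
              exact h2
      have h' : ((i₀:ℕ) + (k + b₁ - M) % b₁) % b₁ = k % b₁ := hme
      rw [h', Nat.mod_eq_of_lt hk]
    have hiofk_uniq : ∀ i : ℕ, (i₀:ℕ) ≤ i → i < (i₀:ℕ) + b₁ → iofk (i % b₁) = i := by
      intro i h1 h2
      have hk : i % b₁ < b₁ := Nat.mod_lt _ hb₁0
      have hw := hiofk_lt (i % b₁)
      exact uniq_mod hw.1 hw.2 h1 h2 (by rw [hiofk_mod _ hk])
    -- the burst pattern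
    set e : ℕ → ZMod 2 := fun s =>
      if h : iofk (s % b₁) < n₁ then
        resSum n₁ n₂ b₂ E₁ ⟨iofk (s % b₁), h⟩ ((s / b₁) % b₂)
      else 0 with hedef
    -- row-residue sums collapse to a single row inside the window
    have hrowsum : ∀ (E : Fin n₁ → Fin n₂ → ZMod 2),
        (∀ (i : Fin n₁) (j : Fin n₂), E i j ≠ 0 →
          (i₀:ℕ) ≤ (i:ℕ) ∧ (i:ℕ) < (i₀:ℕ) + b₁) →
        ∀ (j : Fin n₂) (k : ℕ), k < b₁ →
        (∑ i' : Fin n₁, if (i' : ℕ) % b₁ = k then E i' j else 0)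
          = if h : iofk k < n₁ then E ⟨iofk k, h⟩ j else 0 := by
      intro E hrw j k hk
      by_cases h : iofk k < n₁
      · rw [dif_pos h]
        refine Eq.trans (Finset.sum_eq_single ⟨iofk k, h⟩ (fun i' _ hne' => ?_)
          (fun habs => absurd (Finset.mem_univ _) habs)) ?_
        · by_cases hres : (i' : ℕ) % b₁ = k
          · rw [if_pos hres]
            by_contra hE
            have hwin := hrw i' j hE
            have hthis : iofk k = (i' : ℕ) := by
              rw [← hres]; exact hiofk_uniq _ hwin.1 hwin.2
            exact hne' (Fin.ext hthis.symm)
          · rw [if_neg hres]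
        · exact if_pos (hiofk_mod k hk)
      · rw [dif_neg h]
        refine Finset.sum_eq_zero fun i' _ => ?_
        by_cases hres : (i' : ℕ) % b₁ = k
        · rw [if_pos hres]
          by_contra hE
          have hwin := hrw i' j hE
          have hthis : iofk k = (i' : ℕ) := by
            rw [← hres]; exact hiofk_uniq _ hwin.1 hwin.2
          exact h (hthis ▸ i'.isLt)
        · rw [if_neg hres]
    -- the column fold of a cluster is a placed burst
    have hdvdb : b₁ ∣ b₁ * b₂ := ⟨b₂, rfl⟩
    have hplace : ∀ (E : Fin n₁ → Fin n₂ → ZMod 2) (d : ℕ),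
        d + b₂ ≤ n₂ →
        (∀ (i : Fin n₁) (j : Fin n₂), E i j ≠ 0 → d ≤ (j:ℕ) ∧ (j:ℕ) < d + b₂) →
        (∀ (i : Fin n₁) (j : Fin n₂), E i j ≠ 0 →
          (i₀:ℕ) ≤ (i:ℕ) ∧ (i:ℕ) < (i₀:ℕ) + b₁) →
        (∀ (i : Fin n₁) (c : ℕ), c < b₂ →
          resSum n₁ n₂ b₂ E₁ i c = resSum n₁ n₂ b₂ E i c) →
        ψ E = place nL (b₁ * b₂) (b₁ * d) e := by
      intro E d hd hcol hrow hres
      funext m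
      rw [hψdef, colFold_apply]
      unfold place
      have hkm : (m:ℕ) % b₁ < b₁ := Nat.mod_lt _ hb₁0
      have hdm := Nat.div_add_mod (m:ℕ) b₁
      have hwin : (b₁ * d ≤ (m:ℕ) ∧ (m:ℕ) < b₁ * d + b₁ * b₂) ↔
          (d ≤ (m:ℕ)/b₁ ∧ (m:ℕ)/b₁ < d + b₂) := by
        have h1 : d ≤ (m:ℕ)/b₁ ↔ b₁ * d ≤ (m:ℕ) := by
          rw [Nat.le_div_iff_mul_le hb₁0, mul_comm]
        have h2 : (m:ℕ)/b₁ < d + b₂ ↔ (m:ℕ) < b₁ * d + b₁ * b₂ := by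
          rw [Nat.div_lt_iff_lt_mul hb₁0, add_mul, mul_comm d b₁, mul_comm b₂ b₁]
        rw [h1, h2]
      by_cases hm : b₁ * d ≤ (m:ℕ) ∧ (m:ℕ) < b₁ * d + b₁ * b₂
      · rw [if_pos hm]
        obtain ⟨hm1, hm2⟩ := hwin.mp hm
        have hjlt : (m:ℕ)/b₁ < n₂ := by omega
        rw [dif_pos hjlt]
        rw [hrowsum E hrow ⟨(m:ℕ)/b₁, hjlt⟩ ((m:ℕ) % b₁) hkm]
        rw [hedef]
        simp only []
        have hs1 : (m:ℕ) % (b₁ * b₂) % b₁ = (m:ℕ) % b₁ := Nat.mod_mod_of_dvd _ hdvdb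
        have hs2 : (m:ℕ) % (b₁ * b₂) / b₁ = (m:ℕ) / b₁ % b₂ :=
          Nat.mod_mul_right_div_self _ _ _
        rw [hs1, hs2, Nat.mod_mod_of_dvd _ (dvd_refl b₂)]
        by_cases h : iofk ((m:ℕ) % b₁) < n₁
        · rw [dif_pos h, dif_pos h]
          rw [hres ⟨iofk ((m:ℕ) % b₁), h⟩ ((m:ℕ)/b₁ % b₂) (Nat.mod_lt _ hb₂0')]
          exact (resSum_eq_single E d hcol ⟨iofk ((m:ℕ) % b₁), h⟩
            ⟨(m:ℕ)/b₁, hjlt⟩ hm1 hm2).symm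
        · rw [dif_neg h, dif_neg h]
      · rw [if_neg hm]
        by_cases hjlt : (m:ℕ)/b₁ < n₂
        · rw [dif_pos hjlt]
          refine Finset.sum_eq_zero fun i' _ => ?_
          by_cases hres' : (i' : ℕ) % b₁ = (m:ℕ) % b₁
          · rw [if_pos hres']
            by_contra hE
            have hcw := hcol i' ⟨(m:ℕ)/b₁, hjlt⟩ hE
            exact hm (hwin.mpr hcw)
          · rw [if_neg hres']
        · rw [dif_neg hjlt]
    -- clamped column windows
    have hdfacts : ∀ (E : Fin n₁ → Fin n₂ → ZMod 2) (c₀ : ℕ),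
        (∀ (i : Fin n₁) (j : Fin n₂), E i j ≠ 0 → c₀ ≤ (j:ℕ) ∧ (j:ℕ) < c₀ + b₂) →
        (min c₀ (n₂ - b₂) + b₂ ≤ n₂ ∧
          ∀ (i : Fin n₁) (j : Fin n₂), E i j ≠ 0 →
            min c₀ (n₂ - b₂) ≤ (j:ℕ) ∧ (j:ℕ) < min c₀ (n₂ - b₂) + b₂) := by
      intro E c₀ hw
      rcases le_total c₀ (n₂ - b₂) with hmin | hmin
      · rw [min_eq_left hmin]
        exact ⟨by omega, fun i j hij =>
          ⟨(hw i j hij).1, by have := (hw i j hij).2; omega⟩⟩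
      · rw [min_eq_right hmin]
        refine ⟨by omega, fun i j hij => ⟨?_, ?_⟩⟩
        · have := (hw i j hij).1; omega
        · have := j.isLt; omega
    have hbn₂ : b₁ * n₂ ≤ nL := by
      rw [hn₂, mul_comm]
      exact Nat.div_mul_le_self nL b₁
    have hpos : ∀ d : ℕ, d + b₂ ≤ n₂ → b₁ * d ≤ nL - b₁ * b₂ := by
      intro d hd
      have h1 : b₁ * d + b₁ * b₂ ≤ b₁ * n₂ := by
        calc b₁ * d + b₁ * b₂ = b₁ * (d + b₂) := by ring
          _ ≤ b₁ * n₂ := Nat.mul_le_mul_left _ hd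
      exact Nat.le_sub_of_add_le (le_trans h1 hbn₂)
    obtain ⟨hd1, hcw1⟩ := hdfacts E₁ c₁ (fun i j h => (hw₁ i j h).2)
    obtain ⟨hd2, hcw2⟩ := hdfacts E₂ c₂ (fun i j h => (hw₂ i j h).2)
    have hrw1 : ∀ (i : Fin n₁) (j : Fin n₂), E₁ i j ≠ 0 →
        (i₀:ℕ) ≤ (i:ℕ) ∧ (i:ℕ) < (i₀:ℕ) + b₁ := hrowwin E₁ a₁ c₁ hw₁ rfl
    have hrw2 : ∀ (i : Fin n₁) (j : Fin n₂), E₂ i j ≠ 0 →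
        (i₀:ℕ) ≤ (i:ℕ) ∧ (i:ℕ) < (i₀:ℕ) + b₁ := hrowwin E₂ a₂ c₂ hw₂ hu.symm
    have hp1 := hplace E₁ _ hd1 hcw1 hrw1 (fun i c hc => rfl)
    have hp2 := hplace E₂ _ hd2 hcw2 hrw2 (fun i c hc => hSeq i c hc)
    have hψeq : ψ E₁ = ψ E₂ := by
      have heqp : place nL (b₁ * b₂) (b₁ * min c₁ (n₂ - b₂)) e
          = place nL (b₁ * b₂) (b₁ * min c₂ (n₂ - b₂)) e := by
        by_contra hne'
        exact hC₂ e _ _ (hpos _ hd1) (hpos _ hd2) hne'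
          (by rw [← hp1, ← hp2]; exact hψmem)
      rw [hp1, hp2, heqp]
    -- conclude E₁ = E₂
    apply hne
    funext i j
    by_cases hiwin : (i₀:ℕ) ≤ (i:ℕ) ∧ (i:ℕ) < (i₀:ℕ) + b₁
    · have hmval : b₁ * (j:ℕ) + (i:ℕ) % b₁ < nL := by
        have hlt : b₁ * (j:ℕ) + (i:ℕ) % b₁ < b₁ * ((j:ℕ) + 1) := by
          rw [Nat.mul_add, Nat.mul_one]
          exact Nat.add_lt_add_left (Nat.mod_lt _ hb₁0) _
        have hle : b₁ * ((j:ℕ) + 1) ≤ b₁ * n₂ :=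
          Nat.mul_le_mul_left _ (Nat.succ_le_of_lt j.isLt)
        exact lt_of_lt_of_le hlt (le_trans hle hbn₂)
      have hMdiv : (b₁ * (j:ℕ) + (i:ℕ) % b₁) / b₁ = (j:ℕ) := by
        rw [Nat.mul_add_div hb₁0, Nat.div_eq_of_lt (Nat.mod_lt _ hb₁0), Nat.add_zero]
      have hMmod : (b₁ * (j:ℕ) + (i:ℕ) % b₁) % b₁ = (i:ℕ) % b₁ := by
        rw [Nat.mul_add_mod, Nat.mod_mod_of_dvd _ (dvd_refl b₁)]
      have hio : iofk ((i:ℕ) % b₁) = (i:ℕ) := hiofk_uniq _ hiwin.1 hiwin.2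
      have hval : ∀ (E : Fin n₁ → Fin n₂ → ZMod 2),
          (∀ (i' : Fin n₁) (j' : Fin n₂), E i' j' ≠ 0 →
            (i₀:ℕ) ≤ (i':ℕ) ∧ (i':ℕ) < (i₀:ℕ) + b₁) →
          ψ E ⟨b₁ * (j:ℕ) + (i:ℕ) % b₁, hmval⟩ = E i j := by
        intro E hrw
        rw [hψdef, colFold_apply]
        have hjlt : (b₁ * (j:ℕ) + (i:ℕ) % b₁) / b₁ < n₂ := by rw [hMdiv]; exact j.isLt
        rw [dif_pos hjlt]
        have hsum := hrowsum E hrw ⟨(b₁ * (j:ℕ) + (i:ℕ) % b₁) / b₁, hjlt⟩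
          ((b₁ * (j:ℕ) + (i:ℕ) % b₁) % b₁) (by rw [hMmod]; exact Nat.mod_lt _ hb₁0)
        rw [hsum]
        have hlt' : iofk ((b₁ * (j:ℕ) + (i:ℕ) % b₁) % b₁) < n₁ := by
          rw [hMmod, hio]; exact i.isLt
        rw [dif_pos hlt']
        congr 1
        · exact Fin.ext (show iofk ((b₁ * (j:ℕ) + (i:ℕ) % b₁) % b₁) = (i:ℕ) by
            rw [hMmod, hio])
        · exact Fin.ext hMdiv
      calc E₁ i j = ψ E₁ ⟨b₁ * (j:ℕ) + (i:ℕ) % b₁, hmval⟩ := (hval E₁ hrw1).symm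
        _ = ψ E₂ ⟨b₁ * (j:ℕ) + (i:ℕ) % b₁, hmval⟩ := by rw [hψeq]
        _ = E₂ i j := hval E₂ hrw2
    · have z1 : E₁ i j = 0 := by
        by_contra hE; exact hiwin (hrw1 i j hE)
      have z2 : E₂ i j = 0 := by
        by_contra hE; exact hiwin (hrw2 i j hE)
      rw [z1, z2]
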